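/- For every integer n ≥ 2, ∑_{j=1}^{n−2} C_{n−1−j} · binom(2j−2, j−1) = (n − 2) · C_{n−2}, where C_m denotes the m-th Catalan number. -/

import Mathlib

open Finset

lemma catalan_rec (m : ℕ) : (m + 3) * catalan (m + 2) = 2 * (2 * m + 3) * catalan (m + 1) := by
  have h2 : (m + 3) * catalan (m + 2) = (m + 2).centralBinom :=
    succ_mul_catalan_eq_centralBinom (m + 2)
  have h1 : (m + 2) * catalan (m + 1) = (m + 1).centralBinom :=
    succ_mul_catalan_eq_centralBinom (m + 1)
  have hb : (m + 2) * (m + 2).centralBinom = 2 * (2 * (m + 1) + 1) * (m + 1).centralBinom :=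
    Nat.succ_mul_centralBinom_succ (m + 1)
  have key : (m + 2) * ((m + 3) * catalan (m + 2)) =
      (m + 2) * (2 * (2 * m + 3) * catalan (m + 1)) := by
    calc (m + 2) * ((m + 3) * catalan (m + 2)) = (m + 2) * (m + 2).centralBinom := by rw [h2]
      _ = 2 * (2 * (m + 1) + 1) * (m + 1).centralBinom := hb
      _ = 2 * (2 * (m + 1) + 1) * ((m + 2) * catalan (m + 1)) := by rw [h1]
      _ = (m + 2) * (2 * (2 * m + 3) * catalan (m + 1)) := by ring
  exact Nat.eq_of_mul_eq_mul_left (by omega) key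

lemma catalan_range_sum (m : ℕ) :
    catalan (m + 2) = ∑ i ∈ range (m + 2), catalan i * catalan (m + 1 - i) := by
  rw [show m + 2 = (m + 1) + 1 from rfl, catalan_succ (m + 1),
    Fin.sum_univ_eq_sum_range (fun i => catalan i * catalan (m + 1 - i)) (m + 2)]

lemma key_sum (m : ℕ) :
    2 * ∑ i ∈ range (m + 2), (i + 1) * (catalan i * catalan (m + 1 - i)) =
      (m + 3) * catalan (m + 2) := by
  have hrefl : ∑ i ∈ range (m + 2), (i + 1) * (catalan i * catalan (m + 1 - i)) =
      ∑ i ∈ range (m + 2), (m + 2 - i) * (catalan i * catalan (m + 1 - i)) := by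
    rw [← Finset.sum_range_reflect
      (fun i => (i + 1) * (catalan i * catalan (m + 1 - i))) (m + 2)]
    apply Finset.sum_congr rfl
    intro i hi
    simp only [Finset.mem_range] at hi
    have h1 : m + 2 - 1 - i = m + 1 - i := by omega
    have h2 : m + 1 - (m + 1 - i) = i := by omega
    have h3 : m + 1 - i + 1 = m + 2 - i := by omega
    rw [h1, h2, h3, mul_comm (catalan (m + 1 - i)) (catalan i)]
  calc 2 * ∑ i ∈ range (m + 2), (i + 1) * (catalan i * catalan (m + 1 - i))
      = (∑ i ∈ range (m + 2), (i + 1) * (catalan i * catalan (m + 1 - i))) +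
        ∑ i ∈ range (m + 2), (m + 2 - i) * (catalan i * catalan (m + 1 - i)) := by
        rw [← hrefl]; ring
    _ = ∑ i ∈ range (m + 2), ((i + 1) + (m + 2 - i)) * (catalan i * catalan (m + 1 - i)) := by
        rw [← Finset.sum_add_distrib]
        exact Finset.sum_congr rfl fun i hi => by ring
    _ = ∑ i ∈ range (m + 2), (m + 3) * (catalan i * catalan (m + 1 - i)) := by
        apply Finset.sum_congr rfl
        intro i hi
        simp only [Finset.mem_range] at hi
        congr 1
        omega
    _ = (m + 3) * catalan (m + 2) := by rw [← Finset.mul_sum, ← catalan_range_sum]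

/-- a Catalan-number identity. -/
theorem catalan_identity_six (n : ℕ) (hn : 2 ≤ n) :
    ∑ j ∈ Finset.Icc 1 (n - 2), catalan (n - 1 - j) * (2 * j - 2).choose (j - 1) =
      (n - 2) * catalan (n - 2) := by
  rcases Nat.lt_or_ge n 3 with h3 | h3
  · interval_cases n
    simp
  obtain ⟨m, rfl⟩ : ∃ m, n = m + 3 := ⟨n - 3, by omega⟩
  have hIcc : Finset.Icc 1 (m + 3 - 2) = Finset.Ico 1 (m + 2) := by
    rw [show m + 3 - 2 = m + 1 from rfl]
    exact (Finset.Ico_add_one_right_eq_Icc 1 (m + 1)).symm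
  have hL : ∑ j ∈ Finset.Icc 1 (m + 3 - 2), catalan (m + 3 - 1 - j) * (2 * j - 2).choose (j - 1) =
      ∑ i ∈ range (m + 1), (i + 1) * (catalan i * catalan (m + 1 - i)) := by
    rw [hIcc, Finset.sum_Ico_eq_sum_range]
    apply Finset.sum_congr (by norm_num)
    intro i hi
    simp only [Finset.mem_range] at hi
    have h1 : m + 3 - 1 - (1 + i) = m + 1 - i := by omega
    have h2 : 2 * (1 + i) - 2 = 2 * i := by omega
    have h3 : 1 + i - 1 = i := by omega
    rw [h1, h2, h3]
    have hc : (2 * i).choose i = (i + 1) * catalan i := by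
      rw [succ_mul_catalan_eq_centralBinom]; rfl
    rw [hc]
    ring
  rw [hL, show m + 3 - 2 = m + 1 from rfl]
  set T := ∑ i ∈ range (m + 1), (i + 1) * (catalan i * catalan (m + 1 - i)) with hT
  have hfull : ∑ i ∈ range (m + 2), (i + 1) * (catalan i * catalan (m + 1 - i)) =
      T + (m + 2) * catalan (m + 1) := by
    rw [Finset.sum_range_succ]
    simp
    exact hT.symm
  have hA : 2 * T + 2 * ((m + 2) * catalan (m + 1)) = 2 * (2 * m + 3) * catalan (m + 1) := by
    calc 2 * T + 2 * ((m + 2) * catalan (m + 1))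
        = 2 * (T + (m + 2) * catalan (m + 1)) := by ring
      _ = 2 * ∑ i ∈ range (m + 2), (i + 1) * (catalan i * catalan (m + 1 - i)) := by rw [hfull]
      _ = (m + 3) * catalan (m + 2) := key_sum m
      _ = 2 * (2 * m + 3) * catalan (m + 1) := catalan_rec m
  have hB : 2 * ((m + 1) * catalan (m + 1)) + 2 * ((m + 2) * catalan (m + 1)) =
      2 * (2 * m + 3) * catalan (m + 1) := by ring
  have h2T : 2 * T = 2 * ((m + 1) * catalan (m + 1)) :=
    Nat.add_right_cancel (hA.trans hB.symm)
  exact Nat.eq_of_mul_eq_mul_left (by norm_num) h2T
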